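/- Let v(x) = −(1/c)e^{−cx} with c > 0, and suppose the real-valued processes μ^Z, μ^N, r and ℝⁿ-valued processes σ^Z, σ^N, η (with η in a subspace R) satisfy, for a.e. (t,ω) and all x > 0, the identity μ^Z_t − (1/2)‖η_t − σ^{N,R}_t + σ^{Z,R}_t‖² − c x (r_t − μ^N_t + σ^N_t·η_t − σ^{N,⊥}_t·σ^{Z,⊥}_t) + (c x²/2 − c x)‖σ^{N,⊥}_t‖² = 0. Then necessarily σ^N_t ∈ R, μ^N_t = r_t + σ^N_t·η_t, and μ^Z_t = (1/2)‖η_t − σ^{N,R}_t + σ^{Z,R}_t‖² for a.e. (t,ω). -/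

import Mathlib

/-- if the exponential-utility drift polynomial in `x` vanishes for all
`x > 0`, then `σ^N ∈ R`, `μ^N = r + σ^N·η` and `μ^Z = ½‖η - σ^{N,R} + σ^{Z,R}‖²`. -/
theorem stmt_12 {n : ℕ} (R : Submodule ℝ (EuclideanSpace ℝ (Fin n)))
    (c μZ μN r : ℝ) (hc : 0 < c)
    (σZ σN η : EuclideanSpace ℝ (Fin n)) (hη : η ∈ R)
    (hpoly : ∀ x : ℝ, 0 < x →
      μZ - (1 / 2) * ‖η - (Submodule.orthogonalProjectionOnto R σN : EuclideanSpace ℝ (Fin n))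
          + (Submodule.orthogonalProjectionOnto R σZ : EuclideanSpace ℝ (Fin n))‖ ^ 2
        - c * x * (r - μN + (inner ℝ σN η : ℝ)
            - (inner ℝ ((Submodule.orthogonalProjectionOnto Rᗮ σN : EuclideanSpace ℝ (Fin n)))
                ((Submodule.orthogonalProjectionOnto Rᗮ σZ : EuclideanSpace ℝ (Fin n))) : ℝ))
        + (c * x ^ 2 / 2 - c * x)
            * ‖(Submodule.orthogonalProjectionOnto Rᗮ σN : EuclideanSpace ℝ (Fin n))‖ ^ 2 = 0) :
    σN ∈ R ∧ μN = r + (inner ℝ σN η : ℝ) ∧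
      μZ = (1 / 2) * ‖η - (Submodule.orthogonalProjectionOnto R σN : EuclideanSpace ℝ (Fin n))
          + (Submodule.orthogonalProjectionOnto R σZ : EuclideanSpace ℝ (Fin n))‖ ^ 2 := by
  set a := μZ - (1 / 2) * ‖η - (Submodule.orthogonalProjectionOnto R σN : EuclideanSpace ℝ (Fin n))
          + (Submodule.orthogonalProjectionOnto R σZ : EuclideanSpace ℝ (Fin n))‖ ^ 2 with ha
  set k := r - μN + (inner ℝ σN η : ℝ)
            - (inner ℝ ((Submodule.orthogonalProjectionOnto Rᗮ σN : EuclideanSpace ℝ (Fin n)))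
                ((Submodule.orthogonalProjectionOnto Rᗮ σZ : EuclideanSpace ℝ (Fin n))) : ℝ) with hk
  set q := ‖(Submodule.orthogonalProjectionOnto Rᗮ σN : EuclideanSpace ℝ (Fin n))‖ ^ 2 with hq
  clear_value a k q
  have h1 := hpoly 1 one_pos
  have h2 := hpoly 2 two_pos
  have h3 := hpoly 3 (by norm_num)
  have hq0 : q = 0 := by
    have hcq : c * q = 0 := by nlinarith [h1, h2, h3]
    exact by
      have := mul_eq_zero.mp hcq
      rcases this with h | h
      · exact absurd h (ne_of_gt hc)
      · exact h
  have hk0 : k = 0 := by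
    have : c * k = 0 := by nlinarith [h1, h2]
    rcases mul_eq_zero.mp this with h | h
    · exact absurd h (ne_of_gt hc)
    · exact h
  have ha0 : a = 0 := by rw [hk0, hq0] at h1; ring_nf at h1; linarith [ha, h1]
  have hproj : (Submodule.orthogonalProjectionOnto Rᗮ σN : EuclideanSpace ℝ (Fin n)) = 0 := by
    have := sq_eq_zero_iff.mp (hq ▸ hq0)
    exact norm_eq_zero.mp this
  have hmem : σN ∈ R := by
    have : σN ∈ Rᗮᗮ := by
      rw [← Submodule.orthogonalProjectionOnto_eq_zero_iff]
      exact_mod_cast hproj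
    rwa [Submodule.orthogonal_orthogonal] at this
  have hinner0 : (inner ℝ ((Submodule.orthogonalProjectionOnto Rᗮ σN : EuclideanSpace ℝ (Fin n)))
                ((Submodule.orthogonalProjectionOnto Rᗮ σZ : EuclideanSpace ℝ (Fin n))) : ℝ) = 0 := by
    rw [hproj]; exact inner_zero_left _
  refine ⟨hmem, ?_, ?_⟩
  · have := hk0
    rw [hk, hinner0] at this
    linarith
  · linarith [ha0]
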